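/- Let C = p_r … p_s be a configuration of g-2PATH satisfying the condition of noninterference of extensions (CNI). If (i,j) ∈ K and i+1 ≤ 0, then V(i,j) = V(i+1,j); symmetrically, if (i,j) ∈ K and 0 ≤ j−1, then U(i,j) = U(i,j−1). -/

import Mathlib

open scoped Classical

/-- Two grid positions are adjacent iff their L1 distance is 1. -/
def gridAdj (p q : ℤ × ℤ) : Prop := |p.1 - q.1| + |p.2 - q.2| = 1

lemma gridAdj_symm {p q : ℤ × ℤ} (h : gridAdj p q) : gridAdj q p := by
  unfold gridAdj at h ⊢
  rw [abs_sub_comm q.1 p.1, abs_sub_comm q.2 p.2]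
  exact h

lemma gridAdj_irrefl (p : ℤ × ℤ) : ¬ gridAdj p p := by simp [gridAdj]

/-- The graph induced on a set `X` of grid positions. -/
def gridGraph (X : Set (ℤ × ℤ)) : SimpleGraph (ℤ × ℤ) where
  Adj p q := p ∈ X ∧ q ∈ X ∧ gridAdj p q
  symm := ⟨fun p q h => ⟨h.2.1, h.1, gridAdj_symm h.2.2⟩⟩
  loopless := ⟨fun p h => gridAdj_irrefl p h.2.2⟩

/-- Graph distance inside the set `X`. -/
noncomputable def gdist (X : Set (ℤ × ℤ)) (p q : ℤ × ℤ) : ℕ := (gridGraph X).dist p q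

/-- The boundary condition of `p` in `X`: it records which of the four
neighbors of `p` lie in `X`. -/
def bcond (X : Set (ℤ × ℤ)) (p : ℤ × ℤ) : Set (ℤ × ℤ) := {q ∈ X | gridAdj p q}

/-- The set `M(v, t, X)` of nodes `w` with `d(v_gen, w) + d(w, v) ≤ t`. -/
noncomputable def Mset (v : ℤ × ℤ) (t : ℕ) (X : Set (ℤ × ℤ)) : Set (ℤ × ℤ) :=
  {w ∈ X | gdist X (0, 0) w + gdist X w v ≤ t}

/-- The available information (local map) `ai(v, t, X)`; `none` plays the role of `Q`. -/
noncomputable def ai (v : ℤ × ℤ) (t : ℕ) (X : Set (ℤ × ℤ)) :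
    Option (ℕ × (ℤ × ℤ) × Set ((ℤ × ℤ) × Set (ℤ × ℤ))) :=
  if v ∈ X ∧ (gridGraph X).Reachable (0, 0) v ∧ gdist X (0, 0) v ≤ t then
    some (t, v, (fun w => (w, bcond X w)) '' Mset v t X)
  else none

/-- `X ≡'_{t,v} Y` : `v ∈ X ∩ Y` and `ai(v,t,X) = ai(v,t,Y) ≠ Q`. -/
def equivAt (t : ℕ) (v : ℤ × ℤ) (X Y : Set (ℤ × ℤ)) : Prop :=
  v ∈ X ∧ v ∈ Y ∧ ai v t X = ai v t Y ∧ ai v t X ≠ none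

/-- A configuration: a finite connected set of positions containing the origin. -/
def IsConfig (X : Set (ℤ × ℤ)) : Prop :=
  X.Finite ∧ (0, 0) ∈ X ∧ ∀ p ∈ X, ∀ q ∈ X, (gridGraph X).Reachable p q

/-- `Y` is a consistent extension of the subset `M` of `X`. -/
def ConsExt (X M Y : Set (ℤ × ℤ)) : Prop := M ⊆ Y ∧ ∀ w ∈ M, bcond X w = bcond Y w

/-- `p` restricted to the index interval `[r, s]` is a simple, non-self-touching
lattice path through the origin `p 0 = (0,0)` (a g-2PATH configuration). -/
def IsPathOn (p : ℤ → ℤ × ℤ) (r s : ℤ) : Prop :=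
  r ≤ 0 ∧ 0 ≤ s ∧ p 0 = (0, 0) ∧
    (∀ m, r ≤ m → m < s → gridAdj (p m) (p (m + 1))) ∧
    (∀ m n, r ≤ m → m ≤ s → r ≤ n → n ≤ s → p m = p n → m = n) ∧
    (∀ m n, r ≤ m → m + 2 ≤ n → n ≤ s → ¬ gridAdj (p m) (p n))

/-- A configuration of g-2PATH. -/
structure GPath2 where
  r : ℤ
  s : ℤ
  p : ℤ → ℤ × ℤ
  isPath : IsPathOn p r s

/-- The set of positions of the path. -/
def pathSet (C : GPath2) : Set (ℤ × ℤ) := C.p '' Set.Icc C.r C.s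

/-- The path obtained from the sub-path `p_i … p_j` of `C` by appending the
sequence `x0` on the left and `x1` on the right. -/
def extFun (C : GPath2) (i j : ℤ) (x0 x1 : List (ℤ × ℤ)) : ℤ → ℤ × ℤ := fun m =>
  if m < i then x0.getD (m - (i - x0.length)).toNat (0, 0)
  else if m ≤ j then C.p m
  else x1.getD (m - (j + 1)).toNat (0, 0)

/-- `(x0, x1)` is a pair of sequences of positions such that `x0 p_i … p_j x1`
is a configuration of g-2PATH that is a consistent extension of the sub-path
`p_i … p_j` of `C` (boundary conditions of `p_i … p_j` are preserved). -/
def IsExtPair (C : GPath2) (i j : ℤ) (x0 x1 : List (ℤ × ℤ)) : Prop :=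
  C.r ≤ i ∧ i ≤ 0 ∧ 0 ≤ j ∧ j ≤ C.s ∧
    IsPathOn (extFun C i j x0 x1) (i - x0.length) (j + x1.length) ∧
    ∀ m, i ≤ m → m ≤ j →
      bcond (pathSet C) (C.p m) =
        bcond (extFun C i j x0 x1 '' Set.Icc (i - (x0.length : ℤ)) (j + (x1.length : ℤ)))
          (C.p m)

def Wset (C : GPath2) (i j : ℤ) : Set (List (ℤ × ℤ) × List (ℤ × ℤ)) :=
  {w | IsExtPair C i j w.1 w.2}

def Uset (C : GPath2) (i j : ℤ) : Set (List (ℤ × ℤ)) := Prod.fst '' Wset C i j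

def Vset (C : GPath2) (i j : ℤ) : Set (List (ℤ × ℤ)) := Prod.snd '' Wset C i j

/-- `f(i,j)`: the supremum of lengths of consistent left extensions. -/
noncomputable def fval (C : GPath2) (i j : ℤ) : ENat := ⨆ x ∈ Uset C i j, (x.length : ENat)

/-- `g(i,j)`: the supremum of lengths of consistent right extensions. -/
noncomputable def gval (C : GPath2) (i j : ℤ) : ENat := ⨆ x ∈ Vset C i j, (x.length : ENat)

/-- `NI(i,j)` : `W(i,j) = U(i,j) × V(i,j)`. -/
def NI (C : GPath2) (i j : ℤ) : Prop := Wset C i j = Uset C i j ×ˢ Vset C i j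

def Kset (C : GPath2) : Set (ℤ × ℤ) :=
  {ij | C.r ≤ ij.1 ∧ ij.1 ≤ 0 ∧ 0 ≤ ij.2 ∧ ij.2 ≤ C.s ∧ (Wset C ij.1 ij.2).Finite}

def Iset (C : GPath2) : Set (ℤ × ℤ) :=
  {ij | C.r ≤ ij.1 - 1 ∧ ij.1 ≤ 0 ∧ 0 ≤ ij.2 ∧ ij.2 ≤ C.s ∧
    (Wset C ij.1 ij.2).Infinite ∧ (Wset C (ij.1 - 1) ij.2).Finite}

def Jset (C : GPath2) : Set (ℤ × ℤ) :=
  {ij | C.r ≤ ij.1 ∧ ij.1 ≤ 0 ∧ 0 ≤ ij.2 ∧ ij.2 + 1 ≤ C.s ∧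
    (Wset C ij.1 ij.2).Infinite ∧ (Wset C ij.1 (ij.2 + 1)).Finite}

/-- The condition of noninterference of extensions. -/
def CNI (C : GPath2) : Prop := ∀ ij ∈ Kset C ∪ Iset C ∪ Jset C, NI C ij.1 ij.2

/-- The radius of `X`: the largest distance from the origin within `X`. -/
noncomputable def rad (X : Set (ℤ × ℤ)) : ℕ := sSup {n | ∃ v ∈ X, gdist X (0, 0) v = n}

def EquivStep (t : ℕ) (C C' : GPath2) : Prop := ∃ v, equivAt t v (pathSet C) (pathSet C')

/-- `t` is safe for `C`: some chain `C ≡'_t C₁ ≡'_t … ≡'_t C'` ends in a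
configuration of radius `> t`. -/
def Safe (t : ℕ) (C : GPath2) : Prop :=
  ∃ C' : GPath2, Relation.ReflTransGen (EquivStep t) C C' ∧ t < rad (pathSet C')

/-- The minimum firing time of `C` for g-2PATH: the least unsafe time. -/
noncomputable def mft (C : GPath2) : ℕ := sInf {t | ¬ Safe t C}

/-- `T̃ = min_{r ≤ i ≤ 0 ≤ j ≤ s} max {−2i + j + g(i,j), 2j − i + f(i,j)}`. -/
noncomputable def Ttilde (C : GPath2) : ENat :=
  sInf {x : ENat | ∃ i j : ℤ, C.r ≤ i ∧ i ≤ 0 ∧ 0 ≤ j ∧ j ≤ C.s ∧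
    x = max (((-2 * i + j).toNat : ENat) + gval C i j)
            (((2 * j - i).toNat : ENat) + fval C i j)}

/-- The left hand `p_r … p_0` of `C` is free. -/
def FreeLeft (C : GPath2) : Prop := C.r = 0 ∨ (C.r < 0 ∧ fval C (C.r + 1) C.s = ⊤)

/-- The right hand `p_0 … p_s` of `C` is free. -/
def FreeRight (C : GPath2) : Prop := C.s = 0 ∨ (0 < C.s ∧ gval C C.r (C.s - 1) = ⊤)

/-! ### Auxiliary lemmas -/

lemma extFun_mid (C : GPath2) (i j : ℤ) (x0 x1 : List (ℤ × ℤ)) {m : ℤ}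
    (h1 : i ≤ m) (h2 : m ≤ j) : extFun C i j x0 x1 m = C.p m := by
  unfold extFun; rw [if_neg (by omega), if_pos h2]

lemma extFun_left (C : GPath2) (i j : ℤ) (x0 x1 : List (ℤ × ℤ)) {m : ℤ}
    (h : m < i) : extFun C i j x0 x1 m = x0.getD (m - (i - x0.length)).toNat (0, 0) := by
  unfold extFun; rw [if_pos h]

lemma extFun_right (C : GPath2) (i j : ℤ) (x0 x1 : List (ℤ × ℤ)) {m : ℤ}
    (hij : i ≤ j) (h : j < m) : extFun C i j x0 x1 m = x1.getD (m - (j + 1)).toNat (0, 0) := by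
  unfold extFun; rw [if_neg (by omega), if_neg (by omega)]

lemma isPathOn_congr {f g : ℤ → ℤ × ℤ} {a b : ℤ}
    (hfg : ∀ m, a ≤ m → m ≤ b → f m = g m) (h : IsPathOn f a b) : IsPathOn g a b := by
  obtain ⟨h1, h2, h3, h4, h5, h6⟩ := h
  refine ⟨h1, h2, by rw [← hfg 0 h1 h2]; exact h3, ?_, ?_, ?_⟩
  · intro m hm hms
    rw [← hfg m hm (by omega), ← hfg (m + 1) (by omega) (by omega)]
    exact h4 m hm hms
  · intro m n ham hmb han hnb heq
    exact h5 m n ham hmb han hnb (by rw [hfg m ham hmb, hfg n han hnb]; exact heq)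
  · intro m n ham hmn hnb
    rw [← hfg m ham (by omega), ← hfg n (by omega) hnb]
    exact h6 m n ham hmn hnb

lemma isPathOn_mono {p : ℤ → ℤ × ℤ} {r s a b : ℤ} (h : IsPathOn p r s)
    (hra : r ≤ a) (ha : a ≤ 0) (hb : 0 ≤ b) (hbs : b ≤ s) : IsPathOn p a b :=
  ⟨ha, hb, h.2.2.1, fun m hm hms => h.2.2.2.1 m (by omega) (by omega),
    fun m n e1 e2 e3 e4 => h.2.2.2.2.1 m n (by omega) (by omega) (by omega) (by omega),
    fun m n e1 e2 e3 => h.2.2.2.2.2 m n (by omega) e2 (by omega)⟩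

lemma bcond_path (f : ℤ → ℤ × ℤ) {a b m : ℤ} (h : IsPathOn f a b)
    (hma : a ≤ m) (hmb : m ≤ b) :
    bcond (f '' Set.Icc a b) (f m) = f '' (Set.Icc a b ∩ {m - 1, m + 1}) := by
  ext q
  simp only [bcond, Set.mem_sep_iff, Set.mem_image, Set.mem_inter_iff, Set.mem_Icc,
    Set.mem_insert_iff, Set.mem_singleton_iff]
  constructor
  · rintro ⟨⟨n, ⟨hn1, hn2⟩, rfl⟩, hadj⟩
    refine ⟨n, ⟨⟨hn1, hn2⟩, ?_⟩, rfl⟩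
    by_contra hc
    push_neg at hc
    have hnm : n ≠ m := by rintro rfl; exact gridAdj_irrefl _ hadj
    rcases lt_or_gt_of_ne hnm with hlt | hgt
    · exact h.2.2.2.2.2 n m hn1 (by omega) hmb (gridAdj_symm hadj)
    · exact h.2.2.2.2.2 m n hma (by omega) hn2 hadj
  · rintro ⟨n, ⟨⟨hn1, hn2⟩, hn3⟩, rfl⟩
    refine ⟨⟨n, ⟨hn1, hn2⟩, rfl⟩, ?_⟩
    rcases hn3 with rfl | rfl
    · have := h.2.2.2.1 (m - 1) hn1 (by omega)
      rw [sub_add_cancel] at this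
      exact gridAdj_symm this
    · exact h.2.2.2.1 m hma (by omega)

lemma extFun_congr_shiftL (C : GPath2) {i j : ℤ} (hi : i + 1 ≤ 0) (hj : 0 ≤ j)
    (x0 x1 : List (ℤ × ℤ)) {m : ℤ} (hm : i - (x0.length : ℤ) ≤ m) :
    extFun C (i + 1) j (x0 ++ [C.p i]) x1 m = extFun C i j x0 x1 m := by
  rcases lt_trichotomy m i with h | rfl | h
  · rw [extFun_left _ _ _ _ _ (by omega), extFun_left _ _ _ _ _ h]
    have hlen : ((x0 ++ [C.p i]).length : ℤ) = (x0.length : ℤ) + 1 := by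
      simp [List.length_append]
    rw [hlen]
    have he : (m - (i + 1 - ((x0.length : ℤ) + 1))) = m - (i - x0.length) := by ring
    rw [he]
    exact List.getD_append _ _ _ _ (by omega)
  · rw [extFun_left _ _ _ _ _ (by omega), extFun_mid _ _ _ _ _ le_rfl (by omega)]
    have hlen : ((x0 ++ [C.p m]).length : ℤ) = (x0.length : ℤ) + 1 := by
      simp [List.length_append]
    rw [hlen]
    have he : (m - (m + 1 - ((x0.length : ℤ) + 1))).toNat = x0.length := by omega
    rw [he, List.getD_append_right _ _ _ _ le_rfl]
    simp
  · rcases le_or_gt m j with h2 | h2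
    · rw [extFun_mid _ _ _ _ _ (by omega) h2, extFun_mid _ _ _ _ _ (by omega) h2]
    · rw [extFun_right _ _ _ _ _ (by omega) h2, extFun_right _ _ _ _ _ (by omega) h2]

lemma extFun_congr_shiftR (C : GPath2) {i j : ℤ} (hi : i ≤ 0) (hj : 0 ≤ j - 1)
    (x0 x1 : List (ℤ × ℤ)) {m : ℤ} (hm : m ≤ j + (x1.length : ℤ)) :
    extFun C i (j - 1) x0 (C.p j :: x1) m = extFun C i j x0 x1 m := by
  rcases lt_trichotomy m i with h | rfl | h
  · rw [extFun_left _ _ _ _ _ h, extFun_left _ _ _ _ _ h]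
  · rw [extFun_mid _ _ _ _ _ le_rfl (by omega), extFun_mid _ _ _ _ _ le_rfl (by omega)]
  · rcases le_or_gt m (j - 1) with h2 | h2
    · rw [extFun_mid _ _ _ _ _ (by omega) h2, extFun_mid _ _ _ _ _ (by omega) (by omega)]
    · rcases eq_or_lt_of_le (by omega : j ≤ m) with rfl | h3
      · rw [extFun_right _ _ _ _ _ (by omega) h2, extFun_mid _ _ _ _ _ (by omega) le_rfl]
        have he : (j - (j - 1 + 1)).toNat = 0 := by omega
        rw [he]; rfl
      · rw [extFun_right _ _ _ _ _ (by omega) h2, extFun_right _ _ _ _ _ (by omega) h3]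
        have he : (m - (j - 1 + 1)).toNat = (m - (j + 1)).toNat + 1 := by omega
        rw [he, List.getD_cons_succ]

lemma shiftL {C : GPath2} {i j : ℤ} {x0 x1 : List (ℤ × ℤ)}
    (h : IsExtPair C i j x0 x1) (h10 : i + 1 ≤ 0) :
    IsExtPair C (i + 1) j (x0 ++ [C.p i]) x1 := by
  obtain ⟨hri, hi0, hj0, hjs, hpath, hbc⟩ := h
  have hint : (i + 1) - ((x0 ++ [C.p i]).length : ℤ) = i - (x0.length : ℤ) := by
    simp [List.length_append]
  have hcongr : ∀ m, i - (x0.length : ℤ) ≤ m → m ≤ j + (x1.length : ℤ) →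
      extFun C (i + 1) j (x0 ++ [C.p i]) x1 m = extFun C i j x0 x1 m :=
    fun m hm _ => extFun_congr_shiftL C h10 hj0 x0 x1 hm
  have himg : extFun C (i + 1) j (x0 ++ [C.p i]) x1 ''
      Set.Icc ((i + 1) - ((x0 ++ [C.p i]).length : ℤ)) (j + (x1.length : ℤ)) =
      extFun C i j x0 x1 '' Set.Icc (i - (x0.length : ℤ)) (j + (x1.length : ℤ)) := by
    rw [hint]
    exact Set.image_congr fun m hm => hcongr m hm.1 hm.2
  refine ⟨by omega, h10, hj0, hjs, ?_, ?_⟩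
  · rw [hint]
    exact isPathOn_congr (fun m hm hm2 => (hcongr m hm hm2).symm) hpath
  · intro m hm1 hm2
    rw [himg]
    exact hbc m (by omega) hm2

lemma shiftR {C : GPath2} {i j : ℤ} {x0 x1 : List (ℤ × ℤ)}
    (h : IsExtPair C i j x0 x1) (h10 : 0 ≤ j - 1) :
    IsExtPair C i (j - 1) x0 (C.p j :: x1) := by
  obtain ⟨hri, hi0, hj0, hjs, hpath, hbc⟩ := h
  have hint : (j - 1) + ((C.p j :: x1).length : ℤ) = j + (x1.length : ℤ) := by
    simp [List.length_cons]
  have hcongr : ∀ m, i - (x0.length : ℤ) ≤ m → m ≤ j + (x1.length : ℤ) →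
      extFun C i (j - 1) x0 (C.p j :: x1) m = extFun C i j x0 x1 m :=
    fun m _ hm => extFun_congr_shiftR C hi0 h10 x0 x1 hm
  have himg : extFun C i (j - 1) x0 (C.p j :: x1) ''
      Set.Icc (i - (x0.length : ℤ)) ((j - 1) + ((C.p j :: x1).length : ℤ)) =
      extFun C i j x0 x1 '' Set.Icc (i - (x0.length : ℤ)) (j + (x1.length : ℤ)) := by
    rw [hint]
    exact Set.image_congr fun m hm => hcongr m hm.1 hm.2
  refine ⟨hri, hi0, h10, by omega, ?_, ?_⟩
  · rw [hint]
    exact isPathOn_congr (fun m hm hm2 => (hcongr m hm hm2).symm) hpath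
  · intro m hm1 hm2
    rw [himg]
    exact hbc m hm1 (by omega)

lemma canonical_gen {C : GPath2} {i j : ℤ} {u0 v0 : List (ℤ × ℤ)}
    (hri : C.r ≤ i) (hi0 : i ≤ 0) (hj0 : 0 ≤ j) (hjs : j ≤ C.s)
    (hA : i - (u0.length : ℤ) = max C.r (i - 1))
    (hB : j + (v0.length : ℤ) = min C.s (j + 1))
    (hagree : ∀ m, i - (u0.length : ℤ) ≤ m → m ≤ j + (v0.length : ℤ) →
      extFun C i j u0 v0 m = C.p m) :
    IsExtPair C i j u0 v0 := by
  have hpath : IsPathOn (extFun C i j u0 v0) (i - (u0.length : ℤ)) (j + (v0.length : ℤ)) :=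
    isPathOn_congr (fun m h1 h2 => (hagree m h1 h2).symm)
      (isPathOn_mono C.isPath (by omega) (by omega) (by omega) (by omega))
  refine ⟨hri, hi0, hj0, hjs, hpath, ?_⟩
  intro m hm1 hm2
  have h1 : bcond (pathSet C) (C.p m) = C.p '' (Set.Icc C.r C.s ∩ {m - 1, m + 1}) :=
    bcond_path C.p C.isPath (by omega) (by omega)
  have h2 : bcond (extFun C i j u0 v0 '' Set.Icc (i - (u0.length : ℤ)) (j + (v0.length : ℤ)))
      (C.p m) = extFun C i j u0 v0 ''
        (Set.Icc (i - (u0.length : ℤ)) (j + (v0.length : ℤ)) ∩ {m - 1, m + 1}) := by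
    rw [← hagree m (by omega) (by omega)]
    exact bcond_path _ hpath (by omega) (by omega)
  rw [h1, h2]
  have hidx : Set.Icc C.r C.s ∩ {m - 1, m + 1} =
      Set.Icc (i - (u0.length : ℤ)) (j + (v0.length : ℤ)) ∩ {m - 1, m + 1} := by
    ext n
    simp only [Set.mem_inter_iff, Set.mem_Icc, Set.mem_insert_iff, Set.mem_singleton_iff]
    constructor
    · rintro ⟨⟨e1, e2⟩, e3⟩
      exact ⟨⟨by rcases e3 with rfl | rfl <;> omega, by rcases e3 with rfl | rfl <;> omega⟩, e3⟩
    · rintro ⟨⟨e1, e2⟩, e3⟩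
      exact ⟨⟨by rcases e3 with rfl | rfl <;> omega, by rcases e3 with rfl | rfl <;> omega⟩, e3⟩
  rw [hidx]
  exact (Set.image_congr fun n hn => hagree n hn.1.1 hn.1.2).symm

lemma unshiftL {C : GPath2} {i j : ℤ} {u0 x1 y1 : List (ℤ × ℤ)}
    (h1 : IsExtPair C (i + 1) j (u0 ++ [C.p i]) x1)
    (h2 : IsExtPair C i j u0 y1) : IsExtPair C i j u0 x1 := by
  obtain ⟨hri, hi0, hj0, hjs, hpath2, hbc2⟩ := h2
  obtain ⟨-, h10, -, -, hpath1, hbc1⟩ := h1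
  have hint : (i + 1) - ((u0 ++ [C.p i]).length : ℤ) = i - (u0.length : ℤ) := by
    simp [List.length_append]
  have hcongr : ∀ m, i - (u0.length : ℤ) ≤ m →
      extFun C (i + 1) j (u0 ++ [C.p i]) x1 m = extFun C i j u0 x1 m :=
    fun m hm => extFun_congr_shiftL C h10 hj0 u0 x1 hm
  rw [hint] at hpath1
  have hpath : IsPathOn (extFun C i j u0 x1) (i - (u0.length : ℤ)) (j + (x1.length : ℤ)) :=
    isPathOn_congr (fun m hm _ => hcongr m hm) hpath1
  have himg : extFun C (i + 1) j (u0 ++ [C.p i]) x1 ''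
      Set.Icc ((i + 1) - ((u0 ++ [C.p i]).length : ℤ)) (j + (x1.length : ℤ)) =
      extFun C i j u0 x1 '' Set.Icc (i - (u0.length : ℤ)) (j + (x1.length : ℤ)) := by
    rw [hint]; exact Set.image_congr fun m hm => hcongr m hm.1
  refine ⟨hri, hi0, hj0, hjs, hpath, ?_⟩
  intro m hm1 hm2
  rcases eq_or_lt_of_le hm1 with heq | hlt
  · subst heq
    have e2 := hbc2 i le_rfl (by omega)
    rw [e2]
    have hfi : extFun C i j u0 x1 i = C.p i := extFun_mid _ _ _ _ _ le_rfl (by omega)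
    have hf'i : extFun C i j u0 y1 i = C.p i := extFun_mid _ _ _ _ _ le_rfl (by omega)
    have hb1 : bcond (extFun C i j u0 y1 ''
        Set.Icc (i - (u0.length : ℤ)) (j + (y1.length : ℤ))) (C.p i) =
        extFun C i j u0 y1 ''
          (Set.Icc (i - (u0.length : ℤ)) (j + (y1.length : ℤ)) ∩ {i - 1, i + 1}) := by
      rw [← hf'i]; exact bcond_path _ hpath2 (by omega) (by omega)
    have hb2 : bcond (extFun C i j u0 x1 ''
        Set.Icc (i - (u0.length : ℤ)) (j + (x1.length : ℤ))) (C.p i) =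
        extFun C i j u0 x1 ''
          (Set.Icc (i - (u0.length : ℤ)) (j + (x1.length : ℤ)) ∩ {i - 1, i + 1}) := by
      rw [← hfi]; exact bcond_path _ hpath (by omega) (by omega)
    rw [hb1, hb2]
    have hidx : Set.Icc (i - (u0.length : ℤ)) (j + (y1.length : ℤ)) ∩ {i - 1, i + 1} =
        Set.Icc (i - (u0.length : ℤ)) (j + (x1.length : ℤ)) ∩ {i - 1, i + 1} := by
      ext n
      simp only [Set.mem_inter_iff, Set.mem_Icc, Set.mem_insert_iff, Set.mem_singleton_iff]
      constructor <;> rintro ⟨⟨e1, e2⟩, e3⟩ <;>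
        exact ⟨⟨e1, by rcases e3 with rfl | rfl <;> omega⟩, e3⟩
    rw [hidx]
    refine Set.image_congr fun n hn => ?_
    have hn2 := hn.2
    simp only [Set.mem_insert_iff, Set.mem_singleton_iff] at hn2
    rcases hn2 with rfl | rfl
    · rw [extFun_left _ _ _ _ _ (by omega), extFun_left _ _ _ _ _ (by omega)]
    · rw [extFun_mid _ _ _ _ _ (by omega) (by omega), extFun_mid _ _ _ _ _ (by omega) (by omega)]
  · have := hbc1 m (by omega) hm2
    rw [himg] at this
    exact this

lemma unshiftR {C : GPath2} {i j : ℤ} {x0 v0 y0 : List (ℤ × ℤ)}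
    (h1 : IsExtPair C i (j - 1) x0 (C.p j :: v0))
    (h2 : IsExtPair C i j y0 v0) : IsExtPair C i j x0 v0 := by
  obtain ⟨hri, hi0, hj0, hjs, hpath2, hbc2⟩ := h2
  obtain ⟨-, -, h10, -, hpath1, hbc1⟩ := h1
  have hint : (j - 1) + ((C.p j :: v0).length : ℤ) = j + (v0.length : ℤ) := by
    simp [List.length_cons]
  have hcongr : ∀ m, m ≤ j + (v0.length : ℤ) →
      extFun C i (j - 1) x0 (C.p j :: v0) m = extFun C i j x0 v0 m :=
    fun m hm => extFun_congr_shiftR C hi0 h10 x0 v0 hm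
  rw [hint] at hpath1
  have hpath : IsPathOn (extFun C i j x0 v0) (i - (x0.length : ℤ)) (j + (v0.length : ℤ)) :=
    isPathOn_congr (fun m _ hm => hcongr m hm) hpath1
  have himg : extFun C i (j - 1) x0 (C.p j :: v0) ''
      Set.Icc (i - (x0.length : ℤ)) ((j - 1) + ((C.p j :: v0).length : ℤ)) =
      extFun C i j x0 v0 '' Set.Icc (i - (x0.length : ℤ)) (j + (v0.length : ℤ)) := by
    rw [hint]; exact Set.image_congr fun m hm => hcongr m hm.2
  refine ⟨hri, hi0, hj0, hjs, hpath, ?_⟩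
  intro m hm1 hm2
  rcases eq_or_lt_of_le hm2 with heq | hlt
  · subst heq
    have e2 := hbc2 m (by omega) le_rfl
    rw [e2]
    have hfi : extFun C i m x0 v0 m = C.p m := extFun_mid _ _ _ _ _ (by omega) le_rfl
    have hf'i : extFun C i m y0 v0 m = C.p m := extFun_mid _ _ _ _ _ (by omega) le_rfl
    have hb1 : bcond (extFun C i m y0 v0 ''
        Set.Icc (i - (y0.length : ℤ)) (m + (v0.length : ℤ))) (C.p m) =
        extFun C i m y0 v0 ''
          (Set.Icc (i - (y0.length : ℤ)) (m + (v0.length : ℤ)) ∩ {m - 1, m + 1}) := by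
      rw [← hf'i]; exact bcond_path _ hpath2 (by omega) (by omega)
    have hb2 : bcond (extFun C i m x0 v0 ''
        Set.Icc (i - (x0.length : ℤ)) (m + (v0.length : ℤ))) (C.p m) =
        extFun C i m x0 v0 ''
          (Set.Icc (i - (x0.length : ℤ)) (m + (v0.length : ℤ)) ∩ {m - 1, m + 1}) := by
      rw [← hfi]; exact bcond_path _ hpath (by omega) (by omega)
    rw [hb1, hb2]
    have hidx : Set.Icc (i - (y0.length : ℤ)) (m + (v0.length : ℤ)) ∩ {m - 1, m + 1} =
        Set.Icc (i - (x0.length : ℤ)) (m + (v0.length : ℤ)) ∩ {m - 1, m + 1} := by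
      ext n
      simp only [Set.mem_inter_iff, Set.mem_Icc, Set.mem_insert_iff, Set.mem_singleton_iff]
      constructor <;> rintro ⟨⟨e1, e2⟩, e3⟩ <;>
        exact ⟨⟨by rcases e3 with rfl | rfl <;> omega, e2⟩, e3⟩
    rw [hidx]
    refine Set.image_congr fun n hn => ?_
    have hn2 := hn.2
    simp only [Set.mem_insert_iff, Set.mem_singleton_iff] at hn2
    rcases hn2 with rfl | rfl
    · rw [extFun_mid _ _ _ _ _ (by omega) (by omega), extFun_mid _ _ _ _ _ (by omega) (by omega)]
    · rw [extFun_right _ _ _ _ _ (by omega) (by omega), extFun_right _ _ _ _ _ (by omega) (by omega)]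
  · have := hbc1 m hm1 (by omega)
    rw [himg] at this
    exact this

lemma canonical_mem {C : GPath2} {i j : ℤ}
    (hri : C.r ≤ i) (hi0 : i ≤ 0) (hj0 : 0 ≤ j) (hjs : j ≤ C.s) :
    IsExtPair C i j (if C.r < i then [C.p (i - 1)] else [])
      (if j < C.s then [C.p (j + 1)] else []) := by
  by_cases hcr : C.r < i <;> by_cases hcs : j < C.s <;>
    simp only [if_pos, if_neg, hcr, hcs, if_true, if_false] <;>
    refine canonical_gen hri hi0 hj0 hjs (by simp; omega) (by simp; omega) ?_ <;>
    intro m h1 h2 <;> simp only [List.length_cons, List.length_nil, Nat.cast_one,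
      Nat.cast_zero, Nat.cast_ofNat] at h1 h2
  · rcases lt_trichotomy m i with h | h | h
    · have hm : m = i - 1 := by omega
      subst hm
      rw [extFun_left _ _ _ _ _ h]
      simp
    · subst h
      exact extFun_mid _ _ _ _ _ le_rfl (by omega)
    · rcases le_or_gt m j with h3 | h3
      · exact extFun_mid _ _ _ _ _ (by omega) h3
      · have hm : m = j + 1 := by omega
        subst hm
        rw [extFun_right _ _ _ _ _ (by omega) h3]
        simp
  · rcases lt_trichotomy m i with h | h | h
    · have hm : m = i - 1 := by omega
      subst hm
      rw [extFun_left _ _ _ _ _ h]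
      simp
    · subst h
      exact extFun_mid _ _ _ _ _ le_rfl (by omega)
    · exact extFun_mid _ _ _ _ _ (by omega) (by omega)
  · rcases lt_or_ge m i with h | h
    · omega
    · rcases le_or_gt m j with h3 | h3
      · exact extFun_mid _ _ _ _ _ h h3
      · have hm : m = j + 1 := by omega
        subst hm
        rw [extFun_right _ _ _ _ _ (by omega) h3]
        simp
  · rcases lt_or_ge m i with h | h
    · omega
    · exact extFun_mid _ _ _ _ _ h (by omega)
theorem stmt7 (C : GPath2) (hCNI : CNI C) :
    (∀ i j : ℤ, (i, j) ∈ Kset C → i + 1 ≤ 0 → Vset C i j = Vset C (i + 1) j) ∧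
    (∀ i j : ℤ, (i, j) ∈ Kset C → 0 ≤ j - 1 → Uset C i j = Uset C i (j - 1)) := by
  constructor
  · intro i j hK h10
    obtain ⟨hri, hi0, hj0, hjs, hfin⟩ := hK
    have hNI : NI C (i + 1) j := by
      by_cases hf : (Wset C (i + 1) j).Finite
      · exact hCNI (i + 1, j) (Or.inl (Or.inl ⟨by omega, h10, hj0, hjs, hf⟩))
      · refine hCNI (i + 1, j) (Or.inl (Or.inr ⟨by omega, h10, hj0, hjs, hf, ?_⟩))
        have he : (i + 1 : ℤ) - 1 = i := by ring
        rw [he]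
        exact hfin
    have hNI' : Wset C (i + 1) j = Uset C (i + 1) j ×ˢ Vset C (i + 1) j := hNI
    have hcan : IsExtPair C i j (if C.r < i then [C.p (i - 1)] else [])
        (if j < C.s then [C.p (j + 1)] else []) := canonical_mem hri hi0 hj0 hjs
    ext x1
    constructor
    · rintro ⟨w, hw, rfl⟩
      exact ⟨(w.1 ++ [C.p i], w.2), shiftL hw h10, rfl⟩
    · rintro ⟨w, hw, rfl⟩
      have h1 : ((if C.r < i then [C.p (i - 1)] else []) ++ [C.p i], w.2) ∈
          Wset C (i + 1) j := by
        rw [hNI']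
        exact ⟨⟨((if C.r < i then [C.p (i - 1)] else []) ++ [C.p i],
          (if j < C.s then [C.p (j + 1)] else [])), shiftL hcan h10, rfl⟩, ⟨w, hw, rfl⟩⟩
      exact ⟨((if C.r < i then [C.p (i - 1)] else []), w.2), unshiftL h1 hcan, rfl⟩
  · intro i j hK h01
    obtain ⟨hri, hi0, hj0, hjs, hfin⟩ := hK
    have hNI : NI C i (j - 1) := by
      by_cases hf : (Wset C i (j - 1)).Finite
      · exact hCNI (i, j - 1) (Or.inl (Or.inl ⟨hri, hi0, h01, by omega, hf⟩))
      · refine hCNI (i, j - 1) (Or.inr ⟨hri, hi0, h01, by omega, hf, ?_⟩)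
        have he : (j - 1 : ℤ) + 1 = j := by ring
        rw [he]
        exact hfin
    have hNI' : Wset C i (j - 1) = Uset C i (j - 1) ×ˢ Vset C i (j - 1) := hNI
    have hcan : IsExtPair C i j (if C.r < i then [C.p (i - 1)] else [])
        (if j < C.s then [C.p (j + 1)] else []) := canonical_mem hri hi0 hj0 hjs
    ext x0
    constructor
    · rintro ⟨w, hw, rfl⟩
      exact ⟨(w.1, C.p j :: w.2), shiftR hw h01, rfl⟩
    · rintro ⟨w, hw, rfl⟩
      have h1 : (w.1, C.p j :: (if j < C.s then [C.p (j + 1)] else [])) ∈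
          Wset C i (j - 1) := by
        rw [hNI']
        exact ⟨⟨w, hw, rfl⟩, ⟨((if C.r < i then [C.p (i - 1)] else []),
          C.p j :: (if j < C.s then [C.p (j + 1)] else [])), shiftR hcan h01, rfl⟩⟩
      exact ⟨(w.1, (if j < C.s then [C.p (j + 1)] else [])), unshiftR h1 hcan, rfl⟩
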